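/- Let ⟨G, Eℓ⟩ be a two-player game graph with live edges and let Q, G ⊆ V. Define Z* := νY. μX. ( Q ∩ [ (G ∩ Cpre(Y)) ∪ Apre(Y, X) ] ). Then Z* equals the winning region W of Player 0 in the fair adversarial game over ⟨G, Eℓ⟩ for the safe-Büchi winning condition ψ = □Q ∧ □◇G (i.e. the set of plays π with π(i) ∈ Q for all i and π(i) ∈ G for infinitely many i). Moreover, there exists a memoryless Player-0 strategy that wins the fair adversarial game for ψ from every vertex of Z*. -/

import Mathlib

/-- Least fixed point of a set transformer (Knaster–Tarski form). -/
def lfpSet {V : Type*} (f : Set V → Set V) : Set V := sInf {X | f X ⊆ X}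

/-- Greatest fixed point of a set transformer (Knaster–Tarski form). -/
def gfpSet {V : Type*} (f : Set V → Set V) : Set V := sSup {X | X ⊆ f X}

/-- A two-player game graph with live edges: vertices are partitioned into
Player-0 vertices `V0` and Player-1 vertices `V1`, every vertex has a successor,
and live edges `El` are Player-1 edges. -/
structure LiveGameGraph (V : Type*) where
  V0 : Set V
  V1 : Set V
  E : V → V → Prop
  El : V → V → Prop
  cover : V0 ∪ V1 = Set.univ
  disj : V0 ∩ V1 = ∅
  succ_nonempty : ∀ v : V, ∃ w, E v w
  live_sub : ∀ v w, El v w → v ∈ V1 ∧ E v w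

namespace LiveGameGraph

variable {V : Type*}

/-- Pre∃0(S) -/
def pre0 (Gm : LiveGameGraph V) (S : Set V) : Set V :=
  {v | v ∈ Gm.V0 ∧ ∃ w, Gm.E v w ∧ w ∈ S}

/-- Pre∀1(S) -/
def pre1 (Gm : LiveGameGraph V) (S : Set V) : Set V :=
  {v | v ∈ Gm.V1 ∧ ∀ w, Gm.E v w → w ∈ S}

/-- Cpre(S) -/
def cpre (Gm : LiveGameGraph V) (S : Set V) : Set V := Gm.pre0 S ∪ Gm.pre1 S

/-- Lpre∃(T) -/
def lpre (Gm : LiveGameGraph V) (T : Set V) : Set V :=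
  {v | ∃ w, Gm.El v w ∧ w ∈ T}

/-- Apre(S,T) -/
def apre (Gm : LiveGameGraph V) (S T : Set V) : Set V :=
  Gm.cpre T ∪ (Gm.lpre T ∩ Gm.pre1 S)

end LiveGameGraph

namespace LiveGameGraph

variable {V : Type*}

/-- A play is strongly transition fair if every live edge whose source is visited
infinitely often is itself taken infinitely often. -/
def StronglyFair (Gm : LiveGameGraph V) (π : ℕ → V) : Prop :=
  ∀ v w, Gm.El v w → {i | π i = v}.Infinite → {i | π i = v ∧ π (i + 1) = w}.Infinite

/-- A Player-0 strategy: given the history (the prefix before the current vertex)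
and the current vertex, it chooses an `E`-successor whenever the current vertex
belongs to Player 0. -/
def Strategy0 (Gm : LiveGameGraph V) (ρ : List V → V → V) : Prop :=
  ∀ h v, v ∈ Gm.V0 → Gm.E v (ρ h v)

/-- A Player-1 strategy. -/
def Strategy1 (Gm : LiveGameGraph V) (ρ : List V → V → V) : Prop :=
  ∀ h v, v ∈ Gm.V1 → Gm.E v (ρ h v)

/-- The play compliant with the strategies `ρ0` and `ρ1` starting at `v0`. -/
def Compliant (Gm : LiveGameGraph V) (ρ0 ρ1 : List V → V → V) (v0 : V)
    (π : ℕ → V) : Prop :=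
  π 0 = v0 ∧ ∀ i : ℕ,
    (π i ∈ Gm.V0 → π (i + 1) = ρ0 (List.ofFn fun j : Fin i => π j.1) (π i)) ∧
    (π i ∈ Gm.V1 → π (i + 1) = ρ1 (List.ofFn fun j : Fin i => π j.1) (π i))

/-- Player 0 wins the fair adversarial game for the winning condition `φ`
from `v0` using the strategy `ρ0`. -/
def WinsFrom (Gm : LiveGameGraph V) (φ : (ℕ → V) → Prop)
    (ρ0 : List V → V → V) (v0 : V) : Prop :=
  Gm.Strategy0 ρ0 ∧ ∀ ρ1, Gm.Strategy1 ρ1 → ∀ π, Gm.Compliant ρ0 ρ1 v0 π →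
    (Gm.StronglyFair π → φ π)

/-- The winning region of Player 0 in the fair adversarial game for `φ`. -/
def WinningRegion (Gm : LiveGameGraph V) (φ : (ℕ → V) → Prop) : Set V :=
  {v0 | ∃ ρ0, Gm.WinsFrom φ ρ0 v0}

end LiveGameGraph


section FixAux
variable {V : Type*} {f : Set V → Set V}

lemma lfpSet_le {X : Set V} (h : f X ⊆ X) : lfpSet f ⊆ X := sInf_le h

lemma lfpSet_fixed (hf : Monotone f) : f (lfpSet f) = lfpSet f := by
  have h1 : f (lfpSet f) ⊆ lfpSet f := by
    refine le_sInf fun X hX => ?_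
    exact (hf (sInf_le hX)).trans hX
  exact h1.antisymm (sInf_le (s := {X | f X ⊆ X}) (hf h1))

lemma le_gfpSet {X : Set V} (h : X ⊆ f X) : X ⊆ gfpSet f := le_sSup h

lemma gfpSet_fixed (hf : Monotone f) : f (gfpSet f) = gfpSet f := by
  have h1 : gfpSet f ⊆ f (gfpSet f) := by
    refine sSup_le fun X hX => ?_
    exact hX.trans (hf (le_sSup hX))
  exact (le_sSup (s := {X | X ⊆ f X}) (hf h1)).antisymm h1

lemma lfpSet_mono {g : Set V → Set V} (h : ∀ X, f X ⊆ g X) : lfpSet f ⊆ lfpSet g := by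
  refine le_sInf fun X hX => sInf_le ?_
  exact (h X).trans hX

lemma iter_bot_mono (hf : Monotone f) {m n : ℕ} (h : m ≤ n) : f^[m] ∅ ⊆ f^[n] ∅ := by
  induction n with
  | zero => simp_all
  | succ n ih =>
    rcases Nat.lt_or_ge m (n+1) with h' | h'
    · have := ih (Nat.lt_succ_iff.mp h')
      refine this.trans ?_
      have : ∀ k, f^[k] (∅ : Set V) ⊆ f^[k+1] ∅ := by
        intro k
        induction k with
        | zero => simp
        | succ k ih2 => rw [Function.iterate_succ_apply', Function.iterate_succ_apply']; exact hf ih2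
      exact this n
    · have : m = n+1 := le_antisymm h h'
      subst this; rfl

lemma iter_top_anti (hf : Monotone f) {m n : ℕ} (h : m ≤ n) : f^[n] Set.univ ⊆ f^[m] Set.univ := by
  induction n with
  | zero => simp_all
  | succ n ih =>
    rcases Nat.lt_or_ge m (n+1) with h' | h'
    · refine Set.Subset.trans ?_ (ih (Nat.lt_succ_iff.mp h'))
      have : ∀ k, f^[k+1] (Set.univ : Set V) ⊆ f^[k] Set.univ := by
        intro k
        induction k with
        | zero => simp
        | succ k ih2 =>
          calc f^[k+1+1] (Set.univ : Set V) = f (f^[k+1] Set.univ) :=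
                Function.iterate_succ_apply' _ _ _
            _ ⊆ f (f^[k] Set.univ) := hf ih2
            _ = f^[k+1] Set.univ := (Function.iterate_succ_apply' _ _ _).symm
      exact this n
    · have : m = n+1 := le_antisymm h h'
      subst this; rfl

lemma exists_iter_eq_lfp [Finite V] (hf : Monotone f) : ∃ m, f^[m] ∅ = lfpSet f := by
  obtain ⟨x, y, hxy, hfe⟩ := Finite.exists_ne_map_eq_of_infinite (fun n : ℕ => f^[n] (∅ : Set V))
  wlog hlt : x < y generalizing x y
  · exact this y x hxy.symm hfe.symm (by omega)
  have hfix : f (f^[x] ∅) = f^[x] ∅ := by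
    rw [← Function.iterate_succ_apply' f x]
    refine le_antisymm ?_ (iter_bot_mono hf (Nat.le_succ x))
    calc f^[x+1] ∅ ⊆ f^[y] ∅ := iter_bot_mono hf hlt
    _ = f^[x] ∅ := hfe.symm
  refine ⟨x, le_antisymm ?_ (lfpSet_le hfix.le)⟩
  -- f^[x] ∅ ⊆ lfpSet f
  clear hfix hfe hxy hlt
  induction x with
  | zero => simp
  | succ n ih =>
    rw [Function.iterate_succ_apply']
    calc f (f^[n] ∅) ⊆ f (lfpSet f) := hf ih
    _ = lfpSet f := lfpSet_fixed hf

lemma exists_iter_eq_gfp [Finite V] (hf : Monotone f) : ∃ m, f^[m] Set.univ = gfpSet f := by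
  obtain ⟨x, y, hxy, hfe⟩ := Finite.exists_ne_map_eq_of_infinite (fun n : ℕ => f^[n] (Set.univ : Set V))
  wlog hlt : x < y generalizing x y
  · exact this y x hxy.symm hfe.symm (by omega)
  have hfix : f (f^[x] Set.univ) = f^[x] Set.univ := by
    rw [← Function.iterate_succ_apply' f x]
    refine le_antisymm (iter_top_anti hf (Nat.le_succ x)) ?_
    calc f^[x] Set.univ = f^[y] Set.univ := hfe
    _ ⊆ f^[x+1] Set.univ := iter_top_anti hf hlt
  refine ⟨x, le_antisymm (le_gfpSet hfix.ge) ?_⟩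
  clear hfix hfe hxy hlt
  induction x with
  | zero => simp
  | succ n ih =>
    rw [Function.iterate_succ_apply']
    calc gfpSet f = f (gfpSet f) := (gfpSet_fixed hf).symm
    _ ⊆ f (f^[n] Set.univ) := hf ih

lemma gfp_le_iter (hf : Monotone f) (n : ℕ) : gfpSet f ⊆ f^[n] Set.univ := by
  induction n with
  | zero => simp
  | succ n ih =>
    rw [Function.iterate_succ_apply']
    calc gfpSet f = f (gfpSet f) := (gfpSet_fixed hf).symm
    _ ⊆ f (f^[n] Set.univ) := hf ih

end FixAux


-- BEGIN AUX
namespace FairAux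
open LiveGameGraph
variable {V : Type*}

lemma mem_V0_or_V1 (Gm : LiveGameGraph V) (v : V) : v ∈ Gm.V0 ∨ v ∈ Gm.V1 := by
  have : v ∈ Gm.V0 ∪ Gm.V1 := by rw [Gm.cover]; trivial
  exact this

lemma not_mem_V0 (Gm : LiveGameGraph V) {v : V} (h : v ∈ Gm.V1) : v ∉ Gm.V0 := by
  intro h0
  have : v ∈ Gm.V0 ∩ Gm.V1 := ⟨h0, h⟩
  rw [Gm.disj] at this; exact this

lemma not_mem_V1 (Gm : LiveGameGraph V) {v : V} (h : v ∈ Gm.V0) : v ∉ Gm.V1 := by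
  intro h1
  have : v ∈ Gm.V0 ∩ Gm.V1 := ⟨h, h1⟩
  rw [Gm.disj] at this; exact this

lemma pre0_mono (Gm : LiveGameGraph V) : Monotone Gm.pre0 := by
  intro S T h v hv
  exact ⟨hv.1, hv.2.imp fun w hw => ⟨hw.1, h hw.2⟩⟩

lemma pre1_mono (Gm : LiveGameGraph V) : Monotone Gm.pre1 := by
  intro S T h v hv
  exact ⟨hv.1, fun w hw => h (hv.2 w hw)⟩

lemma cpre_mono (Gm : LiveGameGraph V) : Monotone Gm.cpre := by
  intro S T h
  exact Set.union_subset_union (pre0_mono Gm h) (pre1_mono Gm h)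

lemma lpre_mono (Gm : LiveGameGraph V) : Monotone Gm.lpre := by
  intro S T h v hv
  exact hv.imp fun w hw => ⟨hw.1, h hw.2⟩

lemma apre_mono (Gm : LiveGameGraph V) {S S' T T' : Set V} (hS : S ⊆ S') (hT : T ⊆ T') :
    Gm.apre S T ⊆ Gm.apre S' T' :=
  Set.union_subset_union (cpre_mono Gm hT)
    (Set.inter_subset_inter (lpre_mono Gm hT) (pre1_mono Gm hS))

/-- the inner fixpoint map -/
def innF (Gm : LiveGameGraph V) (Q G Y X : Set V) : Set V :=
  Q ∩ ((G ∩ Gm.cpre Y) ∪ Gm.apre Y X)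

lemma innF_monoX (Gm : LiveGameGraph V) (Q G Y : Set V) : Monotone (innF Gm Q G Y) := by
  intro S T h
  exact Set.inter_subset_inter_right _
    (Set.union_subset_union_right _ (apre_mono Gm subset_rfl h))

lemma innF_monoY (Gm : LiveGameGraph V) (Q G : Set V) {Y Y' : Set V} (h : Y ⊆ Y') (X : Set V) :
    innF Gm Q G Y X ⊆ innF Gm Q G Y' X :=
  Set.inter_subset_inter_right _
    (Set.union_subset_union (Set.inter_subset_inter_right _ (cpre_mono Gm h))
      (apre_mono Gm h subset_rfl))

/-- the outer fixpoint map -/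
def outF (Gm : LiveGameGraph V) (Q G : Set V) (Y : Set V) : Set V :=
  lfpSet (innF Gm Q G Y)

lemma outF_mono (Gm : LiveGameGraph V) (Q G : Set V) : Monotone (outF Gm Q G) :=
  fun _ _ h => lfpSet_mono fun X => innF_monoY Gm Q G h X

/-- pigeonhole: an infinite set of naturals mapped into a finite type has an infinite fiber -/
lemma pigeon [Fintype V] {s : Set ℕ} (hs : s.Infinite) (g : ℕ → V) :
    ∃ w : V, {i | i ∈ s ∧ g i = w}.Infinite := by
  by_contra hc
  push_neg at hc
  have : s = ⋃ w ∈ (Set.univ : Set V), {i | i ∈ s ∧ g i = w} := by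
    ext i; simp only [Set.mem_iUnion, Set.mem_setOf_eq, Set.mem_univ, exists_prop, true_and]
    exact ⟨fun h => ⟨g i, h, rfl⟩, fun ⟨w, h, _⟩ => h⟩
  exact hs (this ▸ Set.Finite.biUnion Set.finite_univ fun w _ => hc w)

lemma shift_infinite {s : Set ℕ} (hs : s.Infinite) {t : Set ℕ}
    (h : ∀ i ∈ s, i + 1 ∈ t) : t.Infinite := by
  have : (fun i => i + 1) '' s ⊆ t := by rintro j ⟨i, hi, rfl⟩; exact h i hi
  exact ((hs.image (fun a ha b hb => by omega)).mono this)

end FairAux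

namespace FairAux
open LiveGameGraph
variable {V : Type*}
section
open Classical

/-- default successor -/
noncomputable def dflt (Gm : LiveGameGraph V) (v : V) : V := (Gm.succ_nonempty v).choose

lemma dflt_E (Gm : LiveGameGraph V) (v : V) : Gm.E v (dflt Gm v) := (Gm.succ_nonempty v).choose_spec

/-- list of live successors -/
noncomputable def liveList [Fintype V] (Gm : LiveGameGraph V) (v : V) : List V :=
  (Finset.univ.filter fun w => Gm.El v w).toList

lemma mem_liveList [Fintype V] (Gm : LiveGameGraph V) (v w : V) :
    w ∈ liveList Gm v ↔ Gm.El v w := by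
  unfold liveList
  rw [Finset.mem_toList, Finset.mem_filter]
  simp

/-- number of occurrences of `v` in a list -/
noncomputable def cnt (h : List V) (v : V) : ℕ := h.countP fun x => decide (x = v)

lemma cnt_append (h : List V) (x v : V) :
    cnt (h ++ [x]) v = cnt h v + if x = v then 1 else 0 := by
  unfold cnt
  rw [List.countP_append]
  congr 1
  by_cases hx : x = v <;> simp [List.countP_cons, hx]

/-- round robin choice among live successors -/
noncomputable def rr [Fintype V] (Gm : LiveGameGraph V) (h : List V) (v : V) : V :=
  if hL : liveList Gm v = [] then dflt Gm v
  else (liveList Gm v).get ⟨cnt h v % (liveList Gm v).length,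
    Nat.mod_lt _ (by cases hLl : liveList Gm v with
      | nil => exact absurd hLl hL
      | cons a l => simp [hLl])⟩

lemma rr_E [Fintype V] (Gm : LiveGameGraph V) (h : List V) (v : V) : Gm.E v (rr Gm h v) := by
  unfold rr
  split
  · exact dflt_E Gm v
  · exact (Gm.live_sub v _ ((mem_liveList Gm v _).mp (List.get_mem _ _))).2

lemma rr_live [Fintype V] (Gm : LiveGameGraph V) (h : List V) (v : V)
    (hL : liveList Gm v ≠ []) : Gm.El v (rr Gm h v) := by
  unfold rr
  rw [dif_neg hL]
  exact (mem_liveList Gm v _).mp (List.get_mem _ _)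

/-- the outer iteration from the top -/
noncomputable def YS [Fintype V] (Gm : LiveGameGraph V) (Q G : Set V) (n : ℕ) : Set V :=
  (outF Gm Q G)^[n] Set.univ

/-- rank of a vertex outside the fixpoint -/
noncomputable def rk [Fintype V] (Gm : LiveGameGraph V) (Q G : Set V) (v : V) : ℕ :=
  if h : ∃ n, v ∉ YS Gm Q G n then Nat.find h else 0

/-- the spoiling strategy of Player 1 -/
noncomputable def spoiler [Fintype V] (Gm : LiveGameGraph V) (Q G : Set V)
    (h : List V) (v : V) : V :=
  if v ∈ Gm.V1 then
    if (∃ x ∈ h, x ∉ Q) ∨ v ∉ Q then rr Gm h v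
    else if v ∉ gfpSet (outF Gm Q G) then
      if hG : ∃ w, Gm.E v w ∧ w ∉ YS Gm Q G (rk Gm Q G v - 1) then hG.choose
      else if liveList Gm v ≠ [] then rr Gm h v
      else if hn : ∃ w, Gm.E v w ∧ w ∉ YS Gm Q G (rk Gm Q G v) then hn.choose
      else dflt Gm v
    else rr Gm h v
  else dflt Gm v

lemma spoiler_E [Fintype V] (Gm : LiveGameGraph V) (Q G : Set V) (h : List V) (v : V) :
    Gm.E v (spoiler Gm Q G h v) := by
  unfold spoiler
  split
  · split
    · exact rr_E Gm h v
    · split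
      · split
        · next hG => exact hG.choose_spec.1
        · split
          · exact rr_E Gm h v
          · split
            · next hn => exact hn.choose_spec.1
            · exact dflt_E Gm v
      · exact rr_E Gm h v
  · exact dflt_E Gm v

/-- the play built from a Player-0 strategy against a Player-1 strategy -/
noncomputable def seqP (st : List V → V → V) (v0 : V) : ℕ → List V × V
  | 0 => ([], v0)
  | n+1 => ((seqP st v0 n).1 ++ [(seqP st v0 n).2], st (seqP st v0 n).1 (seqP st v0 n).2)

noncomputable def ply (st : List V → V → V) (v0 : V) (n : ℕ) : V := (seqP st v0 n).2
noncomputable def hstL (st : List V → V → V) (v0 : V) (n : ℕ) : List V := (seqP st v0 n).1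

lemma ply_zero (st : List V → V → V) (v0 : V) : ply st v0 0 = v0 := rfl
lemma hst_zero (st : List V → V → V) (v0 : V) : hstL st v0 0 = [] := rfl
lemma hst_succ (st : List V → V → V) (v0 : V) (n : ℕ) :
    hstL st v0 (n+1) = hstL st v0 n ++ [ply st v0 n] := rfl
lemma ply_succ (st : List V → V → V) (v0 : V) (n : ℕ) :
    ply st v0 (n+1) = st (hstL st v0 n) (ply st v0 n) := rfl

lemma hst_eq_ofFn (st : List V → V → V) (v0 : V) (n : ℕ) :
    hstL st v0 n = List.ofFn fun j : Fin n => ply st v0 j.1 := by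
  induction n with
  | zero => simp [hst_zero]
  | succ n ih =>
    rw [hst_succ, ih, List.ofFn_succ']
    simp [List.concat_eq_append]

lemma mem_hst (st : List V → V → V) (v0 : V) (n : ℕ) (x : V) :
    x ∈ hstL st v0 n ↔ ∃ j, j < n ∧ ply st v0 j = x := by
  rw [hst_eq_ofFn, List.mem_ofFn]
  constructor
  · rintro ⟨⟨j, hj⟩, hx⟩
    exact ⟨j, hj, hx⟩
  · rintro ⟨j, hj, hx⟩
    exact ⟨⟨j, hj⟩, hx⟩

lemma cnt_hst (st : List V → V → V) (v0 : V) (v : V) (n : ℕ) :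
    cnt (hstL st v0 n) v = Nat.count (fun j => ply st v0 j = v) n := by
  induction n with
  | zero => simp [hst_zero, cnt]
  | succ n ih =>
    rw [hst_succ, cnt_append, ih, Nat.count_succ]

end
end FairAux

namespace FairAux
open LiveGameGraph
variable {V : Type*}
section
open Classical
variable [Fintype V] (Gm : LiveGameGraph V) (Q G : Set V)

lemma YS_anti {m n : ℕ} (h : m ≤ n) : YS Gm Q G n ⊆ YS Gm Q G m :=
  iter_top_anti (outF_mono Gm Q G) h

lemma ZS_sub_YS (n : ℕ) : gfpSet (outF Gm Q G) ⊆ YS Gm Q G n :=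
  gfp_le_iter (outF_mono Gm Q G) n

lemma YS_unfold (n : ℕ) :
    YS Gm Q G (n+1) = innF Gm Q G (YS Gm Q G n) (YS Gm Q G (n+1)) := by
  have h1 : YS Gm Q G (n+1) = outF Gm Q G (YS Gm Q G n) :=
    Function.iterate_succ_apply' _ _ _
  have h2 := lfpSet_fixed (innF_monoX Gm Q G (YS Gm Q G n))
  rw [h1]
  show outF Gm Q G (YS Gm Q G n) = _
  conv_lhs => rw [outF, ← h2]
  rfl

variable {Gm Q G}

lemma exists_out {v : V} (hv : v ∉ gfpSet (outF Gm Q G)) : ∃ n, v ∉ YS Gm Q G n := by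
  obtain ⟨m, hm⟩ := exists_iter_eq_gfp (outF_mono Gm Q G)
  refine ⟨m, ?_⟩
  show v ∉ (outF Gm Q G)^[m] Set.univ
  rw [hm]; exact hv

lemma rk_spec {v : V} (hv : v ∉ gfpSet (outF Gm Q G)) :
    v ∉ YS Gm Q G (rk Gm Q G v) := by
  rw [rk, dif_pos (exists_out hv)]
  exact Nat.find_spec (exists_out hv)

lemma rk_le {v : V} {k : ℕ} (h : v ∉ YS Gm Q G k) : rk Gm Q G v ≤ k := by
  rw [rk, dif_pos ⟨k, h⟩]
  exact Nat.find_le h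

lemma rk_pos {v : V} (hv : v ∉ gfpSet (outF Gm Q G)) : 1 ≤ rk Gm Q G v := by
  by_contra h
  have h0 : rk Gm Q G v = 0 := by omega
  have := rk_spec hv
  rw [h0] at this
  exact this (by simp [YS])

lemma rk_mem {v : V} (hv : v ∉ gfpSet (outF Gm Q G)) :
    v ∈ YS Gm Q G (rk Gm Q G v - 1) := by
  by_contra h
  have := rk_le h
  have := rk_pos hv
  omega

lemma not_YS_not_Z {v : V} {k : ℕ} (h : v ∉ YS Gm Q G k) :
    v ∉ gfpSet (outF Gm Q G) := fun hz => h (ZS_sub_YS Gm Q G k hz)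

/-- consequences of being outside the fixpoint, at rank `rk v` -/
lemma step_out {v : V} (hv : v ∉ gfpSet (outF Gm Q G)) (hQ : v ∈ Q) :
    (v ∈ Gm.V0 → ∀ w, Gm.E v w → w ∉ YS Gm Q G (rk Gm Q G v)) ∧
    (v ∈ G → v ∈ Gm.V0 → ∀ w, Gm.E v w → w ∉ YS Gm Q G (rk Gm Q G v - 1)) ∧
    (v ∈ Gm.V1 → ∃ w, Gm.E v w ∧ w ∉ YS Gm Q G (rk Gm Q G v)) ∧
    (v ∈ G → v ∈ Gm.V1 → ∃ w, Gm.E v w ∧ w ∉ YS Gm Q G (rk Gm Q G v - 1)) ∧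
    (v ∈ Gm.V1 → ¬(∃ w, Gm.E v w ∧ w ∉ YS Gm Q G (rk Gm Q G v - 1)) →
      ∀ w, Gm.El v w → w ∉ YS Gm Q G (rk Gm Q G v)) := by
  set k := rk Gm Q G v - 1 with hk
  have hk1 : rk Gm Q G v = k + 1 := by have := rk_pos hv; omega
  have hvin : v ∈ YS Gm Q G k := rk_mem hv
  have hvout : v ∉ YS Gm Q G (k+1) := hk1 ▸ rk_spec hv
  have hnot : v ∉ (G ∩ Gm.cpre (YS Gm Q G k)) ∪ Gm.apre (YS Gm Q G k) (YS Gm Q G (k+1)) := by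
    intro h
    exact hvout ((YS_unfold Gm Q G k) ▸ (⟨hQ, h⟩ : v ∈ innF Gm Q G _ _))
  have hnc1 : v ∉ Gm.cpre (YS Gm Q G (k+1)) := fun h => hnot (Or.inr (Or.inl h))
  have hGnc : v ∈ G → v ∉ Gm.cpre (YS Gm Q G k) := fun hg hc => hnot (Or.inl ⟨hg, hc⟩)
  have hlp : ¬(v ∈ Gm.lpre (YS Gm Q G (k+1)) ∧ v ∈ Gm.pre1 (YS Gm Q G k)) :=
    fun h => hnot (Or.inr (Or.inr h))
  rw [hk1]
  refine ⟨?_, ?_, ?_, ?_, ?_⟩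
  · intro h0 w hE hw
    exact hnc1 (Or.inl ⟨h0, w, hE, hw⟩)
  · intro hg h0 w hE hw
    exact hGnc hg (Or.inl ⟨h0, w, hE, hw⟩)
  · intro h1
    by_contra hc
    push_neg at hc
    exact hnc1 (Or.inr ⟨h1, fun w hw => hc w hw⟩)
  · intro hg h1
    by_contra hc
    push_neg at hc
    exact hGnc hg (Or.inr ⟨h1, fun w hw => hc w hw⟩)
  · intro h1 hno w hlw hw
    push_neg at hno
    exact hlp ⟨⟨w, hlw, hw⟩, ⟨h1, fun u hu => hno u hu⟩⟩

/-- spoiler unfolding lemmas -/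
lemma spoiler_doomed (Gm : LiveGameGraph V) (Q G : Set V) {h : List V} {v : V}
    (h1 : v ∈ Gm.V1) (hd : (∃ x ∈ h, x ∉ Q) ∨ v ∉ Q) :
    spoiler Gm Q G h v = rr Gm h v := by
  unfold spoiler
  rw [if_pos h1, if_pos hd]

lemma spoiler_alive_dec (Gm : LiveGameGraph V) (Q G : Set V) {h : List V} {v : V}
    (h1 : v ∈ Gm.V1) (hnd : ¬((∃ x ∈ h, x ∉ Q) ∨ v ∉ Q))
    (hC : v ∉ gfpSet (outF Gm Q G))
    (hG : ∃ w, Gm.E v w ∧ w ∉ YS Gm Q G (rk Gm Q G v - 1)) :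
    spoiler Gm Q G h v = hG.choose := by
  unfold spoiler
  rw [if_pos h1, if_neg hnd, if_pos hC, dif_pos hG]

lemma spoiler_alive_live (Gm : LiveGameGraph V) (Q G : Set V) {h : List V} {v : V}
    (h1 : v ∈ Gm.V1) (hnd : ¬((∃ x ∈ h, x ∉ Q) ∨ v ∉ Q))
    (hC : v ∉ gfpSet (outF Gm Q G))
    (hG : ¬∃ w, Gm.E v w ∧ w ∉ YS Gm Q G (rk Gm Q G v - 1))
    (hL : liveList Gm v ≠ []) :
    spoiler Gm Q G h v = rr Gm h v := by
  unfold spoiler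
  rw [if_pos h1, if_neg hnd, if_pos hC, dif_neg hG, if_pos hL]

lemma spoiler_alive_last (Gm : LiveGameGraph V) (Q G : Set V) {h : List V} {v : V}
    (h1 : v ∈ Gm.V1) (hnd : ¬((∃ x ∈ h, x ∉ Q) ∨ v ∉ Q))
    (hC : v ∉ gfpSet (outF Gm Q G))
    (hG : ¬∃ w, Gm.E v w ∧ w ∉ YS Gm Q G (rk Gm Q G v - 1))
    (hL : ¬(liveList Gm v ≠ []))
    (hn : ∃ w, Gm.E v w ∧ w ∉ YS Gm Q G (rk Gm Q G v)) :
    spoiler Gm Q G h v = hn.choose := by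
  unfold spoiler
  rw [if_pos h1, if_neg hnd, if_pos hC, dif_neg hG, if_neg hL, dif_pos hn]

/-- the joint step function -/
noncomputable def stFn (Gm : LiveGameGraph V) (Q G : Set V) (ρ0 : List V → V → V) :
    List V → V → V :=
  fun h v => if v ∈ Gm.V0 then ρ0 h v else spoiler Gm Q G h v

lemma stFn_V0 (Gm : LiveGameGraph V) (Q G : Set V) (ρ0 : List V → V → V) {h : List V} {v : V}
    (h0 : v ∈ Gm.V0) : stFn Gm Q G ρ0 h v = ρ0 h v := if_pos h0

lemma stFn_V1 (Gm : LiveGameGraph V) (Q G : Set V) (ρ0 : List V → V → V) {h : List V} {v : V}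
    (h1 : v ∈ Gm.V1) : stFn Gm Q G ρ0 h v = spoiler Gm Q G h v := if_neg (not_mem_V0 Gm h1)

/-- the round-robin counting argument: if from some point on every visit of `v`
plays round robin, each live edge is taken infinitely often -/
lemma rr_fair (Gm : LiveGameGraph V) (st : List V → V → V) (v0 v w : V) (M : ℕ)
    (hlw : Gm.El v w)
    (hvis : {i | ply st v0 i = v}.Infinite)
    (hrr : ∀ i, M ≤ i → ply st v0 i = v → ply st v0 (i+1) = rr Gm (hstL st v0 i) v) :
    {i | ply st v0 i = v ∧ ply st v0 (i+1) = w}.Infinite := by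
  set p := fun i => ply st v0 i = v with hp
  have hpinf : (setOf p).Infinite := hvis
  set L := liveList Gm v with hL
  have hwL : w ∈ L := (mem_liveList Gm v w).mpr hlw
  have hLne : L ≠ [] := List.ne_nil_of_mem hwL
  obtain ⟨idx, hidx⟩ := List.mem_iff_get.mp hwL
  have hlen : 0 < L.length := idx.1.lt_of_lt_of_le idx.2 le_rfl |>.trans_le le_rfl |> fun _ => Nat.pos_of_ne_zero (fun h0 => hLne (List.length_eq_zero_iff.mp h0))
  refine Set.infinite_of_forall_exists_gt fun a => ?_
  set t := idx.1 + L.length * (a + M + 1) with ht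
  set i := Nat.nth p t with hi
  have hpt : p i := Nat.nth_mem_of_infinite hpinf t
  have hti : t ≤ i := Nat.le_nth (fun hf => absurd hf hpinf)
  have htM : M ≤ t := by
    have : a + M + 1 ≤ L.length * (a + M + 1) := Nat.le_mul_of_pos_left _ hlen
    omega
  have hta : a < t := by
    have : a + M + 1 ≤ L.length * (a + M + 1) := Nat.le_mul_of_pos_left _ hlen
    omega
  have hcnt : cnt (hstL st v0 i) v = t := by
    rw [cnt_hst]
    exact Nat.count_nth_of_infinite hpinf t
  have hstep : ply st v0 (i+1) = rr Gm (hstL st v0 i) v := hrr i (htM.trans hti) hpt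
  have hrrw : rr Gm (hstL st v0 i) v = w := by
    unfold rr
    rw [dif_neg hLne]
    have hmod : cnt (hstL st v0 i) v % L.length = idx.1 := by
      rw [hcnt, ht, Nat.add_mul_mod_self_left, Nat.mod_eq_of_lt idx.2]
    have hfin : (⟨cnt (hstL st v0 i) v % L.length, Nat.mod_lt _ (by cases hLl : L with
      | nil => exact absurd hLl hLne
      | cons a l => simp [hLl])⟩ : Fin L.length) = idx := Fin.ext hmod
    rw [hfin, hidx]
  exact ⟨i, ⟨hpt, by rw [hstep, hrrw]⟩, hta.trans_le hti⟩

end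
end FairAux

namespace FairAux
open LiveGameGraph
variable {V : Type*}
section
open Classical

lemma complete [Fintype V] (Gm : LiveGameGraph V) (Q G : Set V) :
    Gm.WinningRegion (fun π => (∀ i, π i ∈ Q) ∧ ∀ N, ∃ i ≥ N, π i ∈ G) ⊆
      gfpSet (outF Gm Q G) := by
  rintro v0 ⟨ρ0, hρ0, hwin⟩
  by_contra hv0
  set st := stFn Gm Q G ρ0 with hstdef
  set π : ℕ → V := ply st v0 with hπdef
  have hstep0 : ∀ i, π i ∈ Gm.V0 → π (i+1) = ρ0 (hstL st v0 i) (π i) := by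
    intro i h0
    show ply st v0 (i+1) = _
    rw [ply_succ, hstdef, stFn_V0 Gm Q G ρ0 h0]
  have hstep1 : ∀ i, π i ∈ Gm.V1 → π (i+1) = spoiler Gm Q G (hstL st v0 i) (π i) := by
    intro i h1
    show ply st v0 (i+1) = _
    rw [ply_succ, hstdef, stFn_V1 Gm Q G ρ0 h1]
  have hρ1S : Gm.Strategy1 (spoiler Gm Q G) := fun h v _ => spoiler_E Gm Q G h v
  have hcomp : Gm.Compliant ρ0 (spoiler Gm Q G) v0 π := by
    refine ⟨rfl, fun i => ⟨fun h0 => ?_, fun h1 => ?_⟩⟩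
    · rw [hstep0 i h0, hst_eq_ofFn]
    · rw [hstep1 i h1, hst_eq_ofFn]
  -- the core step lemma, under the aliveness assumption
  have hSL : ∀ i, (∀ j, j ≤ i → π j ∈ Q) → π i ∉ gfpSet (outF Gm Q G) →
      π (i+1) ∉ YS Gm Q G (rk Gm Q G (π i)) ∧
      (π i ∈ G → π (i+1) ∉ YS Gm Q G (rk Gm Q G (π i) - 1)) := by
    intro i hA hout
    obtain ⟨f1, f2, f3, f4, f5⟩ := step_out hout (hA i le_rfl)
    rcases mem_V0_or_V1 Gm (π i) with h0 | h1
    · have heq := hstep0 i h0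
      have hEn : Gm.E (π i) (π (i+1)) := heq ▸ hρ0 _ _ h0
      exact ⟨f1 h0 _ hEn, fun hg => f2 hg h0 _ hEn⟩
    · have heq := hstep1 i h1
      have hnd : ¬((∃ x ∈ hstL st v0 i, x ∉ Q) ∨ π i ∉ Q) := by
        push_neg
        constructor
        · intro x hx
          obtain ⟨j, hj, hjx⟩ := (mem_hst st v0 i x).mp hx
          exact hjx ▸ hA j (by omega)
        · exact hA i le_rfl
      by_cases hG : ∃ w, Gm.E (π i) w ∧ w ∉ YS Gm Q G (rk Gm Q G (π i) - 1)
      · have := spoiler_alive_dec Gm Q G h1 hnd hout hG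
        rw [this] at heq
        have hw := hG.choose_spec.2
        have hanti : YS Gm Q G (rk Gm Q G (π i)) ⊆ YS Gm Q G (rk Gm Q G (π i) - 1) :=
          YS_anti Gm Q G (by omega)
        exact ⟨fun hc => (heq ▸ hw) (hanti hc), fun _ => heq ▸ hw⟩
      · have hgG : π i ∉ G := fun hg => hG (f4 hg h1)
        refine ⟨?_, fun hg => absurd hg hgG⟩
        by_cases hL : liveList Gm (π i) ≠ []
        · have := spoiler_alive_live Gm Q G h1 hnd hout hG hL
          rw [this] at heq
          have hlive : Gm.El (π i) (π (i+1)) := heq ▸ rr_live Gm _ _ hL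
          exact f5 h1 hG _ hlive
        · have hn := f3 h1
          have := spoiler_alive_last Gm Q G h1 hnd hout hG hL hn
          rw [this] at heq
          exact heq ▸ hn.choose_spec.2
  by_cases hQall : ∀ i, π i ∈ Q
  · -- Case A: the play remains in Q forever
    have hAin : ∀ i, π i ∉ gfpSet (outF Gm Q G) := by
      intro i
      induction i with
      | zero => exact hv0
      | succ i ih => exact not_YS_not_Z (hSL i (fun j _ => hQall j) ih).1
    have hdec : ∀ i, rk Gm Q G (π (i+1)) ≤ rk Gm Q G (π i) := fun i =>
      rk_le (hSL i (fun j _ => hQall j) (hAin i)).1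
    have hdecG : ∀ i, π i ∈ G → rk Gm Q G (π (i+1)) < rk Gm Q G (π i) := by
      intro i hg
      have h1 := rk_le ((hSL i (fun j _ => hQall j) (hAin i)).2 hg)
      have h2 := rk_pos (hAin i)
      omega
    have hmono : ∀ a b, a ≤ b → rk Gm Q G (π b) ≤ rk Gm Q G (π a) := by
      intro a b hab
      induction b with
      | zero => simp_all
      | succ b ih =>
        rcases Nat.lt_or_ge a (b+1) with h' | h'
        · exact (hdec b).trans (ih (by omega))
        · have : a = b + 1 := by omega
          subst this; rfl
    -- rank stabilization
    obtain ⟨Nst, hNsteq⟩ : ∃ N, ∀ i, N ≤ i → rk Gm Q G (π i) = rk Gm Q G (π N) := by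
      have hne : (Set.range fun i => rk Gm Q G (π i)).Nonempty := ⟨_, ⟨0, rfl⟩⟩
      obtain ⟨N, hN⟩ := Nat.sInf_mem hne
      have hN' : rk Gm Q G (π N) = sInf (Set.range fun i => rk Gm Q G (π i)) := hN
      refine ⟨N, fun i hi => ?_⟩
      have h1 := hmono N i hi
      have h2 : sInf (Set.range fun i => rk Gm Q G (π i)) ≤ rk Gm Q G (π i) :=
        Nat.sInf_le ⟨i, rfl⟩
      omega
    have hnoG : ∀ i, Nst ≤ i → π i ∉ G := by
      intro i hi hg
      have h1 := hdecG i hg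
      have h2 := hNsteq i hi
      have h3 := hNsteq (i+1) (by omega)
      omega
    have hfair : Gm.StronglyFair π := by
      intro v w hlw hvis
      have hv1 : v ∈ Gm.V1 := (Gm.live_sub v w hlw).1
      have hrrvis : ∀ i, Nst ≤ i → π i = v →
          π (i+1) = rr Gm (hstL st v0 i) v := by
        intro i hi hiv
        have h1 : π i ∈ Gm.V1 := by rw [hiv]; exact hv1
        have heq := hstep1 i h1
        have hnd : ¬((∃ x ∈ hstL st v0 i, x ∉ Q) ∨ π i ∉ Q) := by
          push_neg
          exact ⟨fun x hx => by
            obtain ⟨j, _, hjx⟩ := (mem_hst st v0 i x).mp hx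
            exact hjx ▸ hQall j, hQall i⟩
        have hout := hAin i
        have hG : ¬∃ w', Gm.E (π i) w' ∧ w' ∉ YS Gm Q G (rk Gm Q G (π i) - 1) := by
          intro hG
          have hsp := spoiler_alive_dec Gm Q G h1 hnd hout hG
          rw [hsp] at heq
          have hlt : rk Gm Q G (π (i+1)) < rk Gm Q G (π i) := by
            have := rk_le (heq ▸ hG.choose_spec.2)
            have := rk_pos hout
            omega
          have e1 := hNsteq i hi
          have e2 := hNsteq (i+1) (by omega)
          omega
        have hL : liveList Gm (π i) ≠ [] := by
          intro he
          have hwm : w ∈ liveList Gm (π i) := by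
            rw [hiv]; exact (mem_liveList Gm v w).mpr hlw
          rw [he] at hwm; simp at hwm
        have hsp := spoiler_alive_live Gm Q G h1 hnd hout hG hL
        rw [hsp] at heq
        rw [heq, hiv]
      exact rr_fair Gm st v0 v w Nst hlw hvis hrrvis
    obtain ⟨-, hbuchi⟩ := hwin (spoiler Gm Q G) hρ1S π hcomp hfair
    obtain ⟨i, hi, hig⟩ := hbuchi Nst
    exact hnoG i hi hig
  · -- Case B: Q is violated at some point
    push_neg at hQall
    obtain ⟨i0, hi0⟩ := hQall
    have hfair : Gm.StronglyFair π := by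
      intro v w hlw hvis
      have hv1 : v ∈ Gm.V1 := (Gm.live_sub v w hlw).1
      have hrrvis : ∀ i, i0 + 1 ≤ i → π i = v →
          π (i+1) = rr Gm (hstL st v0 i) v := by
        intro i hi hiv
        have h1 : π i ∈ Gm.V1 := by rw [hiv]; exact hv1
        have heq := hstep1 i h1
        have hd : (∃ x ∈ hstL st v0 i, x ∉ Q) ∨ π i ∉ Q :=
          Or.inl ⟨π i0, (mem_hst st v0 i (π i0)).mpr ⟨i0, by omega, rfl⟩, hi0⟩
        have hsp := spoiler_doomed Gm Q G h1 hd
        rw [hsp] at heq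
        rw [heq, hiv]
      exact rr_fair Gm st v0 v w (i0+1) hlw hvis hrrvis
    obtain ⟨hQ', -⟩ := hwin (spoiler Gm Q G) hρ1S π hcomp hfair
    exact hi0 (hQ' i0)

end
end FairAux

namespace FairAux
open LiveGameGraph
variable {V : Type*}

lemma sound [Fintype V] (Gm : LiveGameGraph V) (Q G : Set V) :
    ∃ σ : V → V, (∀ v ∈ Gm.V0, Gm.E v (σ v)) ∧
      ∀ v0 ∈ gfpSet (outF Gm Q G),
        Gm.WinsFrom (fun π => (∀ i, π i ∈ Q) ∧ ∀ N, ∃ i ≥ N, π i ∈ G) (fun _ v => σ v) v0 := by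
  classical
  set ZS := gfpSet (outF Gm Q G) with hZS
  have hZfix : outF Gm Q G ZS = ZS := gfpSet_fixed (outF_mono Gm Q G)
  set g := innF Gm Q G ZS with hg
  have hgmono : Monotone g := innF_monoX Gm Q G ZS
  have hlfp : lfpSet g = ZS := hZfix
  set X : ℕ → Set V := fun n => g^[n] ∅ with hX
  have hXsub : ∀ n, X n ⊆ ZS := by
    intro n
    rw [← hlfp]
    induction n with
    | zero => simp [hX]
    | succ n ih =>
      show g^[n+1] ∅ ⊆ lfpSet g
      rw [Function.iterate_succ_apply']
      calc g (g^[n] ∅) ⊆ g (lfpSet g) := hgmono ih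
      _ = lfpSet g := lfpSet_fixed hgmono
  have hmem : ∀ v ∈ ZS, ∃ n, v ∈ X n := by
    intro v hv
    obtain ⟨m, hm⟩ := exists_iter_eq_lfp (f := g) hgmono
    exact ⟨m, by rw [hX]; simp only []; rw [hm, hlfp]; exact hv⟩
  set rank : V → ℕ := fun v => if hv : ∃ n, v ∈ X n then Nat.find hv else 0 with hrank
  have hrank_mem : ∀ v ∈ ZS, v ∈ X (rank v) := by
    intro v hv
    rw [hrank]; simp only
    rw [dif_pos (hmem v hv)]
    exact Nat.find_spec (hmem v hv)
  have hrank_le : ∀ (v : V) (k : ℕ), v ∈ X k → rank v ≤ k := by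
    intro v k hk
    rw [hrank]; simp only
    rw [dif_pos ⟨k, hk⟩]
    exact Nat.find_le hk
  have hrank_pos : ∀ v ∈ ZS, 1 ≤ rank v := by
    intro v hv
    by_contra h
    have h0 : rank v = 0 := by omega
    have := hrank_mem v hv
    rw [h0] at this
    simp [hX] at this
  have hunfold : ∀ v ∈ ZS, v ∈ Q ∩ ((G ∩ Gm.cpre ZS) ∪ Gm.apre ZS (X (rank v - 1))) := by
    intro v hv
    have h1 : v ∈ X (rank v) := hrank_mem v hv
    have h2 : rank v = (rank v - 1) + 1 := by have := hrank_pos v hv; omega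
    rw [h2] at h1
    rw [hX] at h1; simp only at h1
    rw [Function.iterate_succ_apply'] at h1
    exact h1
  have hZQ : ZS ⊆ Q := by
    intro v hv
    exact (hunfold v hv).1
  -- V1 vertices in ZS keep all successors in ZS
  have hV1 : ∀ v ∈ ZS, v ∈ Gm.V1 → ∀ w, Gm.E v w → w ∈ ZS := by
    intro v hv hv1 w hw
    rcases (hunfold v hv).2 with h | h
    · rcases h.2 with h' | h'
      · exact absurd h'.1 (not_mem_V0 Gm hv1)
      · exact h'.2 w hw
    · rcases h with h | h
      · rcases h with h' | h'
        · exact absurd h'.1 (not_mem_V0 Gm hv1)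
        · exact hXsub _ (h'.2 w hw)
      · exact h.2.2 w hw
  -- existence of good successor for every vertex
  have hσex : ∀ v : V, ∃ w, Gm.E v w ∧ ((v ∈ Gm.V0 ∧ v ∈ ZS) →
      (w ∈ ZS ∧ (v ∉ G ∩ Gm.cpre ZS → w ∈ X (rank v - 1)))) := by
    intro v
    by_cases hv : v ∈ Gm.V0 ∧ v ∈ ZS
    · obtain ⟨hv0, hvZ⟩ := hv
      by_cases hgc : v ∈ G ∩ Gm.cpre ZS
      · rcases hgc.2 with h | h
        · obtain ⟨w, hw1, hw2⟩ := h.2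
          exact ⟨w, hw1, fun _ => ⟨hw2, fun hc => absurd hgc hc⟩⟩
        · exact absurd h.1 (not_mem_V1 Gm hv0)
      · have h := (hunfold v hvZ).2
        rcases h with h | h
        · exact absurd h hgc
        · rcases h with h | h
          · rcases h with h' | h'
            · obtain ⟨w, hw1, hw2⟩ := h'.2
              exact ⟨w, hw1, fun _ => ⟨hXsub _ hw2, fun _ => hw2⟩⟩
            · exact absurd h'.1 (not_mem_V1 Gm hv0)
          · exact absurd h.2.1 (not_mem_V1 Gm hv0)
    · obtain ⟨w, hw⟩ := Gm.succ_nonempty v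
      exact ⟨w, hw, fun h => absurd h hv⟩
  set σ : V → V := fun v => (hσex v).choose with hσ
  have hσE : ∀ v, Gm.E v (σ v) := fun v => (hσex v).choose_spec.1
  have hσgood : ∀ v, v ∈ Gm.V0 → v ∈ ZS →
      σ v ∈ ZS ∧ (v ∉ G ∩ Gm.cpre ZS → σ v ∈ X (rank v - 1)) :=
    fun v h0 hZ => (hσex v).choose_spec.2 ⟨h0, hZ⟩
  refine ⟨σ, fun v _ => hσE v, ?_⟩
  intro v0 hv0
  constructor
  · exact fun h v hv => hσE v
  intro ρ1 hρ1 π hπ hfair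
  -- invariant
  have hstep : ∀ i, π i ∈ ZS → π (i+1) ∈ ZS := by
    intro i hi
    rcases mem_V0_or_V1 Gm (π i) with h0 | h1
    · have := (hπ.2 i).1 h0
      rw [this]
      exact (hσgood (π i) h0 hi).1
    · have := (hπ.2 i).2 h1
      have hE : Gm.E (π i) (π (i+1)) := by rw [this]; exact hρ1 _ _ h1
      exact hV1 (π i) hi h1 _ hE
  have hinv : ∀ i, π i ∈ ZS := by
    intro i
    induction i with
    | zero => rw [hπ.1]; exact hv0
    | succ i ih => exact hstep i ih
  refine ⟨fun i => hZQ (hinv i), ?_⟩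
  -- Büchi part
  by_contra hcon
  push_neg at hcon
  obtain ⟨N, hN⟩ := hcon
  -- pigeonhole for infinitely visited vertices after N
  have hIci : ({i | N ≤ i} : Set ℕ).Infinite := Set.Ici_infinite N
  obtain ⟨v, hvinf⟩ := pigeon hIci π
  -- minimize rank over infinitely visited vertices
  have hTne : ({u : V | {i | i ∈ {i | N ≤ i} ∧ π i = u}.Infinite}).Nonempty := ⟨v, hvinf⟩
  obtain ⟨u, huT, humin⟩ := Set.exists_min_image _ rank (Set.toFinite _) hTne
  have huinf : {i | N ≤ i ∧ π i = u}.Infinite := huT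
  obtain ⟨i0, hi0⟩ := huinf.nonempty
  have huZ : u ∈ ZS := hi0.2 ▸ hinv i0
  have huG : u ∉ G := hi0.2 ▸ hN i0 hi0.1
  have hapre : u ∈ Gm.apre ZS (X (rank u - 1)) := by
    rcases (hunfold u huZ).2 with h | h
    · exact absurd h.1 huG
    · exact h
  have hposu := hrank_pos u huZ
  -- in all cases find w visited infinitely often after N with smaller rank
  have hfind : ∃ w, rank w < rank u ∧ {i | N ≤ i ∧ π i = w}.Infinite := by
    rcases hapre with h | h
    · -- cpre (X (rank u - 1))
      have hnext : ∀ i, N ≤ i → π i = u → π (i+1) ∈ X (rank u - 1) := by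
        intro i hNi hiu
        rcases h with h' | h'
        · -- u ∈ V0
          have h0 : π i ∈ Gm.V0 := hiu ▸ h'.1
          have heq := (hπ.2 i).1 h0
          have hgood := (hσgood (π i) h0 (hinv i)).2
          have : π i ∉ G ∩ Gm.cpre ZS := fun hc => (hiu ▸ huG) (by exact hiu ▸ hc.1)
          rw [heq, hiu]
          have : u ∉ G ∩ Gm.cpre ZS := fun hc => huG hc.1
          exact (hσgood u (hiu ▸ h0) huZ).2 this
        · -- u ∈ V1
          have h1 : π i ∈ Gm.V1 := hiu ▸ h'.1
          have heq := (hπ.2 i).2 h1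
          have hE : Gm.E (π i) (π (i+1)) := by rw [heq]; exact hρ1 _ _ h1
          rw [hiu] at hE
          exact h'.2 _ hE
      obtain ⟨w, hwinf⟩ := pigeon (s := {i | N ≤ i ∧ π i = u}) huinf (fun i => π (i+1))
      obtain ⟨j0, hj0⟩ := hwinf.nonempty
      have hwX : w ∈ X (rank u - 1) := hj0.2 ▸ hnext j0 hj0.1.1 hj0.1.2
      refine ⟨w, by have := hrank_le w _ hwX; omega, ?_⟩
      refine shift_infinite hwinf ?_
      rintro i ⟨⟨hNi, _⟩, hiw⟩
      exact ⟨by omega, hiw⟩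
    · -- live edge into X (rank u - 1)
      obtain ⟨⟨w, hlw, hwX⟩, _⟩ := h
      have hvis : {i | π i = u}.Infinite := huinf.mono fun i hi => hi.2
      have hedge := hfair u w hlw hvis
      have hedge' : ({i | π i = u ∧ π (i+1) = w} \ {i | i < N}).Infinite :=
        hedge.diff (Set.finite_lt_nat N)
      refine ⟨w, by have := hrank_le w _ hwX; omega, ?_⟩
      refine shift_infinite hedge' ?_
      rintro i ⟨⟨_, hiw⟩, hnN⟩
      simp only [Set.mem_setOf_eq, not_lt] at hnN
      exact ⟨by omega, hiw⟩
  obtain ⟨w, hwlt, hwinf⟩ := hfind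
  exact absurd (humin w hwinf) (by omega)

end FairAux

/-- the fixpoint νY. μX. (Q ∩ [(G ∩ Cpre(Y)) ∪ Apre(Y,X)]) equals the
winning region of Player 0 in the fair adversarial game for the safe-Büchi
condition □Q ∧ □◇G, and a memoryless winning Player-0 strategy exists on it. -/
theorem fair_adversarial_safe_buchi {V : Type*} [Fintype V]
    (Gm : LiveGameGraph V) (Q G : Set V) (Zstar : Set V)
    (hZ : Zstar = gfpSet fun Y => lfpSet fun X =>
      Q ∩ ((G ∩ Gm.cpre Y) ∪ Gm.apre Y X)) :
    Zstar = Gm.WinningRegion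
        (fun π => (∀ i, π i ∈ Q) ∧ ∀ N, ∃ i ≥ N, π i ∈ G) ∧
    ∃ σ : V → V, (∀ v ∈ Gm.V0, Gm.E v (σ v)) ∧
      ∀ v0 ∈ Zstar,
        Gm.WinsFrom (fun π => (∀ i, π i ∈ Q) ∧ ∀ N, ∃ i ≥ N, π i ∈ G)
          (fun _ v => σ v) v0 := by
  classical
  obtain ⟨σ, hσE, hσwin⟩ := FairAux.sound Gm Q G
  have hZeq : Zstar = gfpSet (FairAux.outF Gm Q G) := hZ
  constructor
  · refine Set.Subset.antisymm ?_ ?_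
    · intro v hv
      exact ⟨_, hσwin v (hZeq ▸ hv)⟩
    · rw [hZeq]
      exact FairAux.complete Gm Q G
  · exact ⟨σ, hσE, fun v0 hv0 => hσwin v0 (hZeq ▸ hv0)⟩
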